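/- Let M, a, s be positive integers with M > 1 such that the sum of M consecutive squares starting at a^2 is a perfect square, i.e. ∑_{i=0}^{M-1} (a+i)^2 = s^2. If M = 24·m₁ for a positive integer m₁, then for every integer i ≥ 2 one has m₁ ≢ 2^(2i-3) (mod 2^(2i-2)). -/

import Mathlib

lemma sumsq_aux (a n : ℕ) :
    6 * ∑ i ∈ Finset.range (n + 1), (a + i) ^ 2
      = (n + 1) * (6 * a ^ 2 + 6 * a * n + n * (2 * n + 1)) := by
  induction n with
  | zero => simp
  | succ n ih =>
    rw [Finset.sum_range_succ, Nat.mul_add, ih]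
    ring

theorem stmt (M a s m₁ : ℕ) (hM : 1 < M) (ha : 1 ≤ a) (hs : 1 ≤ s)
    (hsum : ∑ i ∈ Finset.range M, (a + i) ^ 2 = s ^ 2)
    (hm : 1 ≤ m₁) (hMeq : M = 24 * m₁) :
    ∀ i : ℕ, 2 ≤ i → ¬ m₁ ≡ 2 ^ (2 * i - 3) [MOD 2 ^ (2 * i - 2)] := by
  intro i hi hcon
  -- extract m₁ = 2^(2i-3) * (2q+1)
  have hlt : (2:ℕ) ^ (2 * i - 3) < 2 ^ (2 * i - 2) :=
    Nat.pow_lt_pow_right (by norm_num) (by omega)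
  have h1 : m₁ % 2 ^ (2 * i - 2) = 2 ^ (2 * i - 3) := by
    have := hcon
    unfold Nat.ModEq at this
    rwa [Nat.mod_eq_of_lt hlt] at this
  set q := m₁ / 2 ^ (2 * i - 2) with hq
  have h2 : m₁ = 2 ^ (2 * i - 2) * q + 2 ^ (2 * i - 3) := by
    rw [← h1]; exact (Nat.div_add_mod m₁ _).symm
  have hpe : (2:ℕ) ^ (2 * i - 2) = 2 ^ (2 * i - 3) * 2 := by
    rw [← pow_succ]
    congr 1
    omega
  have key : m₁ = 2 ^ (2 * i - 3) * (2 * q + 1) := by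
    rw [h2, hpe]; ring
  -- the closed form
  set n := M - 1 with hn
  have hMn : M = n + 1 := by omega
  set T := 6 * a ^ 2 + 6 * a * n + n * (2 * n + 1) with hT
  have h6 : 6 * s ^ 2 = 24 * m₁ * T := by
    rw [← hsum, hMn, sumsq_aux, ← hT, ← hMn, hMeq]
  -- T is odd
  have hnodd : n % 2 = 1 := by omega
  have hTodd : T % 2 = 1 := by
    have e1 : (6 * a ^ 2 + 6 * a * n) % 2 = 0 := by
      have h : 6 * a ^ 2 + 6 * a * n = 2 * (3 * (a ^ 2 + a * n)) := by ring
      omega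
    have e2 : n * (2 * n + 1) % 2 = 1 := by
      have hodd : Odd (2 * n + 1) := ⟨n, by ring⟩
      have := Nat.odd_iff.mp ((Nat.odd_iff.mpr hnodd).mul hodd)
      omega
    omega
  -- s^2 = 2^(2i-1) * ((2q+1) * T)
  have hpow : (24:ℕ) * (2 ^ (2 * i - 3)) = 6 * 2 ^ (2 * i - 1) := by
    have : 2 * i - 1 = (2 * i - 3) + 2 := by omega
    rw [this, pow_add]; ring
  have hs2 : s ^ 2 = 2 ^ (2 * i - 1) * ((2 * q + 1) * T) := by
    apply Nat.eq_of_mul_eq_mul_left (show 0 < 6 by norm_num)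
    rw [h6, key]
    calc 24 * (2 ^ (2 * i - 3) * (2 * q + 1)) * T
        = 24 * 2 ^ (2 * i - 3) * ((2 * q + 1) * T) := by ring
      _ = 6 * 2 ^ (2 * i - 1) * ((2 * q + 1) * T) := by rw [hpow]
      _ = 6 * (2 ^ (2 * i - 1) * ((2 * q + 1) * T)) := by ring
  -- valuation argument
  have hw_odd : ((2 * q + 1) * T) % 2 = 1 := by
    have hodd : Odd (2 * q + 1) := ⟨q, by ring⟩
    exact Nat.odd_iff.mp (Odd.mul hodd (Nat.odd_iff.mpr hTodd))
  have hw_ne : (2 * q + 1) * T ≠ 0 := by omega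
  have hs_ne : s ≠ 0 := by omega
  have hp : Nat.Prime 2 := Nat.prime_two
  have hv1 : padicValNat 2 (s ^ 2) = 2 * padicValNat 2 s :=
    padicValNat.pow (n := 2) s
  have hv2 : padicValNat 2 (2 ^ (2 * i - 1) * ((2 * q + 1) * T))
      = (2 * i - 1) + padicValNat 2 ((2 * q + 1) * T) := by
    rw [padicValNat.mul (by positivity) hw_ne, padicValNat.prime_pow]
  have hv3 : padicValNat 2 ((2 * q + 1) * T) = 0 :=
    padicValNat.eq_zero_of_not_dvd (by omega)
  rw [hs2, hv2, hv3] at hv1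
  omega
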